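/- Let C be a hereditary abelian category and (N, e) a differential structure with N projective (i.e., e : N → N with e² = 0). Then (N, e) is isomorphic, in the category of differential structures, to (I ⊕ Ker e, [[0,0],[μ,0]]) where I ≅ Im e and μ : I → Ker e is induced by e. -/

import Mathlib

open CategoryTheory CategoryTheory.Limits

/-- Let `C` be a hereditary abelian category (subobjects of projectives are projective)
and `(N, e)` a differential structure with `N` projective (`e : N ⟶ N`, `e ≫ e = 0`).
Then `(N, e)` is isomorphic, in the category of differential structures, to
`(I ⊞ ker e, [[0,0],[μ,0]])` where `I ≅ im e` and `μ : I ⟶ ker e` is induced by `e`;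
being a morphism of differential structures means the isomorphism intertwines `e`
with the matrix differential `(i,k) ↦ (0, μ i)`. -/
theorem stmt2 {C : Type*} [Category C] [Abelian C]
    (hered : ∀ ⦃X Y : C⦄ (f : X ⟶ Y), Mono f → Projective Y → Projective X)
    (N : C) (hN : Projective N) (e : N ⟶ N) (he : e ≫ e = 0) :
    ∃ (I : C) (_ : I ≅ image e) (μ : I ⟶ kernel e) (φ : N ≅ I ⊞ kernel e),
      Mono μ ∧ e ≫ φ.hom = φ.hom ≫ (biprod.fst ≫ μ ≫ biprod.inr) := by
  set I := image e
  set p : N ⟶ I := factorThruImage e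
  set ι : I ⟶ N := image.ι e
  have hfac : p ≫ ι = e := image.fac e
  have hIproj : Projective I := hered ι inferInstance hN
  -- section of p
  have hpe : Epi p := inferInstance
  obtain ⟨s, hs⟩ : ∃ s : I ⟶ N, s ≫ p = 𝟙 I :=
    ⟨Projective.factorThru (𝟙 I) p, Projective.factorThru_comp _ _⟩
  -- image.ι ≫ e = 0
  have hιe : ι ≫ e = 0 := by
    have : p ≫ ι ≫ e = p ≫ 0 := by
      rw [comp_zero, ← Category.assoc, hfac, he]
    exact (cancel_epi p).mp (by simpa only [Category.assoc] using this)
  set μ : I ⟶ kernel e := kernel.lift e ι hιe with hμdef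
  have hμι : μ ≫ kernel.ι e = ι := kernel.lift_ι e ι hιe
  have hμmono : Mono μ := by
    have : Mono (μ ≫ kernel.ι e) := by rw [hμι]; infer_instance
    exact mono_of_mono μ (kernel.ι e)
  -- q : N ⟶ kernel e
  have hq0 : (𝟙 N - p ≫ s) ≫ e = 0 := by
    have hse : p ≫ s ≫ e = e := by
      conv_rhs => rw [← hfac]
      rw [← hfac]
      calc p ≫ s ≫ p ≫ ι = p ≫ (s ≫ p) ≫ ι := by simp
        _ = p ≫ ι := by rw [hs]; simp
    rw [Preadditive.sub_comp, Category.id_comp, Category.assoc, hse, sub_self]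
  set q : N ⟶ kernel e := kernel.lift e (𝟙 N - p ≫ s) hq0 with hqdef
  have hqι : q ≫ kernel.ι e = 𝟙 N - p ≫ s := kernel.lift_ι _ _ _
  have hιp : kernel.ι e ≫ p = 0 := by
    have : kernel.ι e ≫ p ≫ ι = 0 ≫ ι := by
      rw [hfac, kernel.condition, zero_comp]
    simpa using (cancel_mono ι).mp (by simpa using this)
  have hsq : s ≫ q = 0 := by
    have : s ≫ q ≫ kernel.ι e = 0 ≫ kernel.ι e := by
      rw [hqι, zero_comp, Preadditive.comp_sub, Category.comp_id, ← Category.assoc, hs,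
        Category.id_comp, sub_self]
    exact (cancel_mono (kernel.ι e)).mp (by simpa only [Category.assoc] using this)
  have hkq : kernel.ι e ≫ q = 𝟙 (kernel e) := by
    have : kernel.ι e ≫ q ≫ kernel.ι e = 𝟙 (kernel e) ≫ kernel.ι e := by
      rw [hqι, Category.id_comp, Preadditive.comp_sub, Category.comp_id, ← Category.assoc,
        hιp, zero_comp, sub_zero]
    exact (cancel_mono (kernel.ι e)).mp (by simpa only [Category.assoc] using this)
  refine ⟨I, Iso.refl I, μ, ?_, hμmono, ?_⟩
  · exact
      { hom := biprod.lift p q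
        inv := biprod.desc s (kernel.ι e)
        hom_inv_id := by
          simp [biprod.lift_desc, hqι]
        inv_hom_id := by
          ext <;> simp [hs, hsq, hιp, hkq] <;> exact Category.comp_id _ }
  · -- e ≫ φ.hom = φ.hom ≫ (fst ≫ μ ≫ inr)
    have hep : e ≫ p = 0 := by
      have : e ≫ p ≫ ι = 0 ≫ ι := by rw [hfac, he, zero_comp]
      exact (cancel_mono ι).mp (by simpa only [Category.assoc] using this)
    have heq : e ≫ q = p ≫ μ := by
      have : e ≫ q ≫ kernel.ι e = (p ≫ μ) ≫ kernel.ι e := by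
        rw [hqι, Category.assoc, hμι, hfac, Preadditive.comp_sub, Category.comp_id,
          ← Category.assoc, hep, zero_comp, sub_zero]
      exact (cancel_mono (kernel.ι e)).mp (by simpa only [Category.assoc] using this)
    ext
    · simp [hep]
    · simp [heq]
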